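/- On ℝⁿ with n ≥ 4, let b₂(x) = e₁ + Σ_{i=2}^{n−1} x^{i+1} e_i and fix i with 1 ≤ i ≤ n−3. Let D^{(i)}(x) = span{b₂(x), eₙ, e_{n−1}, …, e_{n−i}} ⊆ ℝⁿ. Then: (1) for every k with n−i+1 ≤ k ≤ n, the constant vector field e_k satisfies [e_k, b₂](x) = e_{k−1} ∈ D^{(i)}(x) and [e_k, e_j] = 0 for all j, so e_k is a Cauchy characteristic vector field of D^{(i)}; (2) [e_{n−i}, b₂](x) = e_{n−i−1}, and e_{n−i−1} ∉ D^{(i)}(x) for every x ∈ ℝⁿ. -/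

import Mathlib

/-- `b₂(x) = e₁ + Σ_{i=2}^{n−1} x^{i+1} e_i` (componentwise, 0-based indices). -/
noncomputable def chainedB2 (n : ℕ) : (Fin n → ℝ) → (Fin n → ℝ) :=
  fun x j => if j.val = 0 then 1 else if h : j.val + 1 < n then x ⟨j.val + 1, h⟩ else 0

/-- The derived flag `D^{(i)}(x) = span{b₂(x), eₙ, e_{n−1}, …, e_{n−i}}` at a point `x`,
the standard basis vectors `e_k` (1-based `k ∈ {n−i, …, n}`) having 0-based
indices `m` with `n − 1 − i ≤ m`. -/
noncomputable def derivedFlag (n i : ℕ) (x : Fin n → ℝ) : Submodule ℝ (Fin n → ℝ) :=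
  Submodule.span ℝ (insert (chainedB2 n x)
    {v : Fin n → ℝ | ∃ m : Fin n, n - 1 - i ≤ m.val ∧ v = Pi.single m 1})

noncomputable def chainedL (n : ℕ) : (Fin n → ℝ) →L[ℝ] (Fin n → ℝ) :=
  ContinuousLinearMap.pi fun j =>
    if h : j.val ≠ 0 ∧ j.val + 1 < n then ContinuousLinearMap.proj ⟨j.val + 1, h.2⟩ else 0

lemma chainedB2_eq (n : ℕ) :
    chainedB2 n = fun x => chainedB2 n 0 + chainedL n x := by
  funext x j
  simp only [chainedB2, chainedL, Pi.add_apply, ContinuousLinearMap.pi_apply]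
  split_ifs with h1 h2 h3 h4 <;>
    simp_all [ContinuousLinearMap.proj_apply]

lemma fderiv_chainedB2 (n : ℕ) (x : Fin n → ℝ) :
    fderiv ℝ (chainedB2 n) x = chainedL n := by
  rw [chainedB2_eq n]
  exact (((chainedL n).hasFDerivAt).const_add _).fderiv

lemma chainedL_single (n : ℕ) (k : Fin n) (h2 : 2 ≤ k.val) :
    chainedL n (Pi.single k (1:ℝ)) =
      Pi.single (⟨k.val - 1, Nat.lt_of_le_of_lt (Nat.sub_le _ _) k.isLt⟩ : Fin n) (1 : ℝ) := by
  funext j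
  simp only [chainedL, ContinuousLinearMap.pi_apply, Pi.single_apply, Fin.ext_iff]
  split_ifs with h hh hhh <;>
    first
    | rfl
    | (simp_all [ContinuousLinearMap.proj_apply, Pi.single_apply, Fin.ext_iff]; omega)
    | omega

lemma bracket_single_b2 (n : ℕ) (k : Fin n) (h2 : 2 ≤ k.val) (x : Fin n → ℝ) :
    VectorField.lieBracket ℝ (fun _ => Pi.single k (1 : ℝ)) (chainedB2 n) x =
      Pi.single (⟨k.val - 1, Nat.lt_of_le_of_lt (Nat.sub_le _ _) k.isLt⟩ : Fin n) (1 : ℝ) := by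
  rw [VectorField.lieBracket, fderiv_chainedB2, fderiv_fun_const]
  simp [chainedL_single n k h2]

/-- On ℝⁿ with n ≥ 4 and 1 ≤ i ≤ n−3:
(1) for every `k` with `n−i+1 ≤ k ≤ n` (1-based; 0-based index `k` with `n−i ≤ k`), the constant
vector field `e_k` satisfies `[e_k, b₂](x) = e_{k−1} ∈ D^{(i)}(x)` and `[e_k, e_j] = 0` for all
`j` (so `e_k` is a Cauchy characteristic vector field of `D^{(i)}`);
(2) `[e_{n−i}, b₂](x) = e_{n−i−1}`, and `e_{n−i−1} ∉ D^{(i)}(x)` for every `x`. -/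
theorem stmt2 (n : ℕ) (hn : 4 ≤ n) (i : ℕ) (hi1 : 1 ≤ i) (hi2 : i ≤ n - 3)
    (x : Fin n → ℝ) :
    -- (1)
    ((∀ k : Fin n, n - i ≤ k.val →
      VectorField.lieBracket ℝ (fun _ => Pi.single k (1 : ℝ)) (chainedB2 n) x =
        Pi.single (⟨k.val - 1, Nat.lt_of_le_of_lt (Nat.sub_le _ _) k.isLt⟩ : Fin n) (1 : ℝ) ∧
      (Pi.single (⟨k.val - 1, Nat.lt_of_le_of_lt (Nat.sub_le _ _) k.isLt⟩ : Fin n) (1 : ℝ)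
          ∈ derivedFlag n i x) ∧
      (∀ j : Fin n, ∀ y : Fin n → ℝ,
        VectorField.lieBracket ℝ (fun _ => Pi.single k (1 : ℝ))
          (fun _ => Pi.single j (1 : ℝ)) y = 0))) ∧
    -- (2)
    (VectorField.lieBracket ℝ
        (fun _ => Pi.single (⟨n - 1 - i, by omega⟩ : Fin n) (1 : ℝ)) (chainedB2 n) x =
      Pi.single (⟨n - 2 - i, by omega⟩ : Fin n) (1 : ℝ) ∧
      Pi.single (⟨n - 2 - i, by omega⟩ : Fin n) (1 : ℝ) ∉ derivedFlag n i x) := by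
  have hk2 : ∀ k : Fin n, n - i ≤ k.val → 2 ≤ k.val := fun k hk => by omega
  refine ⟨fun k hk => ⟨bracket_single_b2 n k (hk2 k hk) x, ?_, fun j y => ?_⟩, ?_, ?_⟩
  · -- membership
    apply Submodule.subset_span
    exact Or.inr ⟨_, by simp; omega, rfl⟩
  · -- bracket of constants
    simp [VectorField.lieBracket]
  · -- bracket in (2)
    have h := bracket_single_b2 n ⟨n - 1 - i, by omega⟩ (by simp; omega) x
    rw [h]
    have e : (⟨n - 1 - i - 1, by omega⟩ : Fin n) = (⟨n - 2 - i, by omega⟩ : Fin n) := by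
      apply Fin.ext
      show n - 1 - i - 1 = n - 2 - i
      omega
    exact congrArg (fun j : Fin n => Pi.single j (1:ℝ)) e
  · -- non-membership
    intro hmem
    rw [derivedFlag, Submodule.mem_span_insert] at hmem
    obtain ⟨a, z, hz, heq⟩ := hmem
    set t : Fin n := ⟨n - 2 - i, by omega⟩ with ht_def
    have hK : z ∈ LinearMap.ker (LinearMap.proj (R := ℝ) (φ := fun _ : Fin n => ℝ) ⟨0, by omega⟩) ⊓
        LinearMap.ker (LinearMap.proj (R := ℝ) (φ := fun _ : Fin n => ℝ) t) := by
      refine Submodule.span_le.2 ?_ hz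
      rintro v ⟨m, hm, rfl⟩
      rw [SetLike.mem_coe, Submodule.mem_inf]
      refine ⟨LinearMap.mem_ker.2 ?_, LinearMap.mem_ker.2 ?_⟩ <;>
        · rw [LinearMap.proj_apply]
          exact Pi.single_eq_of_ne (by simp [ht_def, Fin.ext_iff]; omega) 1
    obtain ⟨hz0, hzt⟩ := Submodule.mem_inf.1 hK
    rw [LinearMap.mem_ker, LinearMap.proj_apply] at hz0 hzt
    have hb0 : chainedB2 n x ⟨0, by omega⟩ = 1 := by simp [chainedB2]
    have hs0 : Pi.single (M := fun _ : Fin n => ℝ) t 1 ⟨0, by omega⟩ = 0 := by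
      apply Pi.single_eq_of_ne
      apply Fin.ne_of_val_ne
      show (0:ℕ) ≠ n - 2 - i
      omega
    have h0 := congrFun heq ⟨0, by omega⟩
    rw [hs0] at h0
    simp only [Pi.add_apply, Pi.smul_apply, smul_eq_mul, hb0, hz0, mul_one, add_zero] at h0
    have ht := congrFun heq t
    rw [Pi.single_eq_same] at ht
    simp only [Pi.add_apply, Pi.smul_apply, smul_eq_mul, hzt, add_zero, ← h0, zero_mul] at ht
    exact one_ne_zero ht
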